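/- Let a¹, …, a^I be nonzero vectors in ℝ^J, b ∈ ℝ^I, and suppose C = { x ∈ [0,1]^J : ⟨aⁱ, x⟩ = b_i for i = 1, …, I } is nonempty. Define A_C = Q ∘ U_I ∘ ⋯ ∘ U_1, where U_i(x) = x + ((b_i − ⟨aⁱ, x⟩)/‖aⁱ‖²) aⁱ and Q is componentwise clipping to [0,1], and define Prox(x) = √(∑_{i=1}^I (b_i − ⟨aⁱ, x⟩)²). Then for every ε > 0, every y⁰ ∈ [0,1]^J, every bounded sequence {v^k} in ℝ^J, and all scalars β_k ≥ 0 with ∑_{k=0}^∞ β_k < ∞, the sequence generated by y^{k+1} = A_C(y^k + β_k v^k) has some iterate with Prox(y^k) ≤ ε. -/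

import Mathlib

open scoped RealInnerProductSpace

private lemma abs_le_mul_sqrt' {r A X : ℝ} (hA : 0 ≤ A) (h : r ^ 2 ≤ A ^ 2 * X) :
    |r| ≤ A * Real.sqrt X := by
  have := Real.sqrt_le_sqrt h
  rwa [Real.sqrt_sq_eq_abs, Real.sqrt_mul (sq_nonneg A), Real.sqrt_sq hA] at this

private lemma clip_coord' {s t : ℝ} (h0 : 0 ≤ s) (h1 : s ≤ 1) :
    |min (max t 0) 1 - s| ≤ |t - s| := by
  rcases le_total t 0 with h2 | h2 <;> rcases le_total t 1 with h3 | h3 <;>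
    rcases abs_cases (t - s) with ⟨he, _⟩ | ⟨he, _⟩ <;>
    simp only [min_def, max_def] <;> split_ifs <;> rw [abs_le] <;> constructor <;> linarith

private lemma step_identity' {J : ℕ} (a c x : EuclideanSpace ℝ (Fin J)) (b : ℝ) (ha : a ≠ 0)
    (hc : ⟪a, c⟫ = b) :
    ‖x + ((b - ⟪a, x⟫) / ‖a‖ ^ 2) • a - c‖ ^ 2
      = ‖x - c‖ ^ 2 - ((b - ⟪a, x⟫) / ‖a‖) ^ 2 := by
  have hna : ‖a‖ ≠ 0 := norm_ne_zero_iff.mpr ha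
  have h1 : x + ((b - ⟪a, x⟫) / ‖a‖ ^ 2) • a - c
      = (x - c) + ((b - ⟪a, x⟫) / ‖a‖ ^ 2) • a := by abel
  rw [h1, norm_add_sq_real, real_inner_smul_right, norm_smul]
  have h2 : ⟪x - c, a⟫ = ⟪a, x⟫ - b := by
    rw [real_inner_comm, inner_sub_right, hc]
  rw [h2, Real.norm_eq_abs, mul_pow, sq_abs]
  field_simp
  ring

private lemma sqrt_split_le' (n p q : ℝ) (hn : 0 ≤ n) (hp : 0 ≤ p) (hq : 0 ≤ q) :
    Real.sqrt (n * p) + Real.sqrt q ≤ Real.sqrt ((n + 1) * (p + q)) := by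
  rw [show (n+1)*(p+q) = (Real.sqrt (n*p) + Real.sqrt q)^2 + (Real.sqrt (n*q) - Real.sqrt p)^2 by
    have e1 : Real.sqrt (n*p) ^ 2 = n * p := Real.sq_sqrt (by positivity)
    have e2 : Real.sqrt q ^ 2 = q := Real.sq_sqrt hq
    have e3 : Real.sqrt (n*q) ^ 2 = n * q := Real.sq_sqrt (by positivity)
    have e4 : Real.sqrt p ^ 2 = p := Real.sq_sqrt hp
    have e5 : Real.sqrt (n*p) * Real.sqrt q = Real.sqrt (n*q) * Real.sqrt p := by
      rw [← Real.sqrt_mul (by positivity), ← Real.sqrt_mul (by positivity)]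
      ring_nf
    nlinarith [e1, e2, e3, e4, e5]]
  calc Real.sqrt (n*p) + Real.sqrt q
      = Real.sqrt ((Real.sqrt (n*p) + Real.sqrt q)^2) := by
        rw [Real.sqrt_sq (by positivity)]
    _ ≤ _ := Real.sqrt_le_sqrt (by nlinarith [sq_nonneg (Real.sqrt (n*q) - Real.sqrt p)])

private lemma sweep_lemma' {J : ℕ} (c : EuclideanSpace ℝ (Fin J)) :
    ∀ (I : ℕ) (a : Fin I → EuclideanSpace ℝ (Fin J)) (b : Fin I → ℝ),
      (∀ i, a i ≠ 0) → (∀ i, ⟪a i, c⟫ = b i) →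
      ∀ x : EuclideanSpace ℝ (Fin J),
      ‖Fin.foldl I (fun z i => z + ((b i - ⟪a i, z⟫) / ‖a i‖ ^ 2) • a i) x - c‖ ^ 2
          ≤ ‖x - c‖ ^ 2 ∧
      ∀ i, |b i - ⟪a i, x⟫| ≤ ‖a i‖ *
        Real.sqrt ((I : ℝ) * (‖x - c‖ ^ 2 -
          ‖Fin.foldl I (fun z i => z + ((b i - ⟪a i, z⟫) / ‖a i‖ ^ 2) • a i) x - c‖ ^ 2)) := by
  intro I
  induction I with
  | zero =>
    intro a b ha hc x
    refine ⟨by simp, fun i => i.elim0⟩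
  | succ n ih =>
    intro a b ha hc x
    rw [Fin.foldl_succ]
    set x1 := x + ((b 0 - ⟪a 0, x⟫) / ‖a 0‖ ^ 2) • a 0 with hx1
    obtain ⟨h1, h2⟩ := ih (fun i => a i.succ) (fun i => b i.succ)
      (fun i => ha _) (fun i => hc _) x1
    set z := Fin.foldl n
      (fun w i => w + ((b i.succ - ⟪a i.succ, w⟫) / ‖a i.succ‖ ^ 2) • a i.succ) x1 with hz
    have hna0 : ‖a 0‖ ≠ 0 := norm_ne_zero_iff.mpr (ha 0)
    have hid : ‖x1 - c‖ ^ 2 = ‖x - c‖ ^ 2 - ((b 0 - ⟪a 0, x⟫) / ‖a 0‖) ^ 2 :=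
      step_identity' (a 0) c x (b 0) (ha 0) (hc 0)
    set E0 : ℝ := ((b 0 - ⟪a 0, x⟫) / ‖a 0‖) ^ 2 with hE0
    have hE0n : 0 ≤ E0 := sq_nonneg _
    set D1 : ℝ := ‖x1 - c‖ ^ 2 - ‖z - c‖ ^ 2 with hD1
    have hD1n : 0 ≤ D1 := by simp only [hD1]; linarith
    have hDtot : ‖x - c‖ ^ 2 - ‖z - c‖ ^ 2 = E0 + D1 := by
      simp only [hD1]; rw [hid]; ring
    constructor
    · linarith
    · intro i
      refine Fin.cases ?_ ?_ i
      · apply abs_le_mul_sqrt' (norm_nonneg _)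
        rw [hDtot]
        have : (b 0 - ⟪a 0, x⟫) ^ 2 = ‖a 0‖ ^ 2 * E0 := by
          rw [hE0]; field_simp
        rw [this]
        have hn0 : (0:ℝ) ≤ (n:ℝ) := Nat.cast_nonneg n
        push_cast
        nlinarith [sq_nonneg ‖a 0‖,
          mul_nonneg (mul_nonneg (sq_nonneg ‖a 0‖) hn0) (add_nonneg hE0n hD1n),
          mul_nonneg (sq_nonneg ‖a 0‖) hD1n]
      · intro j
        have hb : b j.succ - ⟪a j.succ, x⟫
            = (b j.succ - ⟪a j.succ, x1⟫) + ⟪a j.succ, x1 - x⟫ := by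
          rw [inner_sub_right]; ring
        have hx1x : x1 - x = ((b 0 - ⟪a 0, x⟫) / ‖a 0‖ ^ 2) • a 0 := by
          rw [hx1]; abel
        have hcs : |⟪a j.succ, x1 - x⟫| ≤ ‖a j.succ‖ * Real.sqrt E0 := by
          rw [hx1x, real_inner_smul_right, abs_mul]
          have hcs2 : |⟪a j.succ, a 0⟫| ≤ ‖a j.succ‖ * ‖a 0‖ := abs_real_inner_le_norm _ _
          have hs : Real.sqrt E0 = |b 0 - ⟪a 0, x⟫| / ‖a 0‖ := by
            rw [hE0, Real.sqrt_sq_eq_abs, abs_div, abs_of_nonneg (norm_nonneg _)]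
          rw [hs, abs_div, abs_of_nonneg (sq_nonneg ‖a 0‖)]
          calc |b 0 - ⟪a 0, x⟫| / ‖a 0‖ ^ 2 * |⟪a j.succ, a 0⟫|
              ≤ |b 0 - ⟪a 0, x⟫| / ‖a 0‖ ^ 2 * (‖a j.succ‖ * ‖a 0‖) := by
                apply mul_le_mul_of_nonneg_left hcs2 (by positivity)
            _ = ‖a j.succ‖ * (|b 0 - ⟪a 0, x⟫| / ‖a 0‖) := by
                field_simp
        have h2j := h2 j
        calc |b j.succ - ⟪a j.succ, x⟫|
            ≤ |b j.succ - ⟪a j.succ, x1⟫| + |⟪a j.succ, x1 - x⟫| := by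
              rw [hb]; exact abs_add_le _ _
          _ ≤ ‖a j.succ‖ * Real.sqrt ((n : ℝ) * D1) + ‖a j.succ‖ * Real.sqrt E0 :=
              add_le_add h2j hcs
          _ = ‖a j.succ‖ * (Real.sqrt ((n : ℝ) * D1) + Real.sqrt E0) := by ring
          _ ≤ ‖a j.succ‖ * Real.sqrt (((n : ℝ) + 1) * (D1 + E0)) := by
              apply mul_le_mul_of_nonneg_left _ (norm_nonneg _)
              exact sqrt_split_le' _ _ _ (Nat.cast_nonneg n) hD1n hE0n
          _ = ‖a j.succ‖ * Real.sqrt (((n : ℕ) + 1 : ℕ) * (‖x - c‖ ^ 2 - ‖z - c‖ ^ 2)) := by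
              rw [hDtot]; push_cast; ring_nf

private lemma clip_dist_le' {J : ℕ} (x w c : EuclideanSpace ℝ (Fin J))
    (hw : ∀ j, w j = min (max (x j) 0) 1)
    (hc : ∀ j, 0 ≤ c j ∧ c j ≤ 1) : ‖w - c‖ ≤ ‖x - c‖ := by
  rw [EuclideanSpace.norm_eq, EuclideanSpace.norm_eq]
  apply Real.sqrt_le_sqrt
  apply Finset.sum_le_sum
  intro j _
  have e1 : (w - c) j = w j - c j := rfl
  have e2 : (x - c) j = x j - c j := rfl
  rw [e1, e2, Real.norm_eq_abs, Real.norm_eq_abs]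
  have := clip_coord' (t := x j) (hc j).1 (hc j).2
  rw [← hw j] at this
  exact pow_le_pow_left₀ (abs_nonneg _) this 2

private lemma box_norm_le' {J : ℕ} (x c : EuclideanSpace ℝ (Fin J))
    (hx : ∀ j, 0 ≤ x j ∧ x j ≤ 1) (hc : ∀ j, 0 ≤ c j ∧ c j ≤ 1) :
    ‖x - c‖ ≤ Real.sqrt J := by
  rw [EuclideanSpace.norm_eq]
  apply Real.sqrt_le_sqrt
  calc (∑ j, ‖(x - c) j‖ ^ 2) ≤ ∑ _j : Fin J, 1 := by
        apply Finset.sum_le_sum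
        intro j _
        have e : (x - c) j = x j - c j := rfl
        rw [e, Real.norm_eq_abs]
        have : |x j - c j| ≤ 1 := by
          rw [abs_le]
          constructor <;> [linarith [(hx j).1, (hc j).2]; linarith [(hx j).2, (hc j).1]]
        calc |x j - c j| ^ 2 ≤ 1 ^ 2 := pow_le_pow_left₀ (abs_nonneg _) this 2
          _ = 1 := one_pow 2
    _ = J := by simp

private lemma prox_lip' {J I : ℕ} (a : Fin I → EuclideanSpace ℝ (Fin J)) (b : Fin I → ℝ)
    (x u : EuclideanSpace ℝ (Fin J)) :
    Real.sqrt (∑ i, (b i - ⟪a i, x⟫) ^ 2)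
      ≤ Real.sqrt (∑ i, (b i - ⟪a i, u⟫) ^ 2)
        + Real.sqrt (∑ i, ‖a i‖ ^ 2) * ‖x - u‖ := by
  set P : EuclideanSpace ℝ (Fin I) := (WithLp.equiv 2 (Fin I → ℝ)).symm
    (fun i => b i - ⟪a i, u⟫) with hP
  set Qv : EuclideanSpace ℝ (Fin I) := (WithLp.equiv 2 (Fin I → ℝ)).symm
    (fun i => ⟪a i, u - x⟫) with hQv
  have hPa : ∀ i, P i = b i - ⟪a i, u⟫ := fun i => rfl
  have hQa : ∀ i, Qv i = ⟪a i, u - x⟫ := fun i => rfl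
  have hsum : ∀ i, (P + Qv) i = (b i - ⟪a i, u⟫) + ⟪a i, u - x⟫ := fun i => rfl
  have e1 : Real.sqrt (∑ i, (b i - ⟪a i, x⟫) ^ 2) = ‖P + Qv‖ := by
    rw [EuclideanSpace.norm_eq]
    congr 1
    apply Finset.sum_congr rfl
    intro i _
    rw [hsum i, Real.norm_eq_abs, sq_abs, inner_sub_right]
    ring_nf
  have e2 : ‖P‖ = Real.sqrt (∑ i, (b i - ⟪a i, u⟫) ^ 2) := by
    rw [EuclideanSpace.norm_eq]
    congr 1
    exact Finset.sum_congr rfl fun i _ => by rw [hPa i, Real.norm_eq_abs, sq_abs]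
  have e3 : ‖Qv‖ ≤ Real.sqrt (∑ i, ‖a i‖ ^ 2) * ‖x - u‖ := by
    rw [EuclideanSpace.norm_eq]
    have : Real.sqrt (∑ i, ‖a i‖ ^ 2) * ‖x - u‖
        = Real.sqrt ((∑ i, ‖a i‖ ^ 2) * ‖x - u‖ ^ 2) := by
      rw [Real.sqrt_mul (by positivity), Real.sqrt_sq (norm_nonneg _)]
    rw [this]
    apply Real.sqrt_le_sqrt
    rw [Finset.sum_mul]
    apply Finset.sum_le_sum
    intro i _
    rw [hQa i, Real.norm_eq_abs, sq_abs]
    have hcs : |⟪a i, u - x⟫| ≤ ‖a i‖ * ‖u - x‖ := abs_real_inner_le_norm _ _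
    calc ⟪a i, u - x⟫ ^ 2 = |⟪a i, u - x⟫| ^ 2 := (sq_abs _).symm
      _ ≤ (‖a i‖ * ‖u - x‖) ^ 2 := pow_le_pow_left₀ (abs_nonneg _) hcs 2
      _ = ‖a i‖ ^ 2 * ‖x - u‖ ^ 2 := by rw [norm_sub_rev]; ring
  calc Real.sqrt (∑ i, (b i - ⟪a i, x⟫) ^ 2) = ‖P + Qv‖ := e1
    _ ≤ ‖P‖ + ‖Qv‖ := norm_add_le _ _
    _ ≤ _ := by rw [e2]; exact add_le_add_right e3 _

private lemma key_ineq {I J : ℕ}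
    (a : Fin I → EuclideanSpace ℝ (Fin J)) (ha : ∀ i, a i ≠ 0)
    (b : Fin I → ℝ) (c : EuclideanSpace ℝ (Fin J))
    (hcbox : ∀ j, 0 ≤ c j ∧ c j ≤ 1) (hcb : ∀ i, ⟪a i, c⟫ = b i)
    (U : Fin I → EuclideanSpace ℝ (Fin J) → EuclideanSpace ℝ (Fin J))
    (hU : ∀ i x, U i x = x + ((b i - ⟪a i, x⟫) / ‖a i‖ ^ 2) • a i)
    (Q : EuclideanSpace ℝ (Fin J) → EuclideanSpace ℝ (Fin J))
    (hQ : ∀ (x : EuclideanSpace ℝ (Fin J)) (j : Fin J), Q x j = min (max (x j) 0) 1)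
    (AC : EuclideanSpace ℝ (Fin J) → EuclideanSpace ℝ (Fin J))
    (hAC : ∀ x, AC x = Q (Fin.foldl I (fun z i => U i z) x))
    (Prox : EuclideanSpace ℝ (Fin J) → ℝ)
    (hProx : ∀ x, Prox x = Real.sqrt (∑ i, (b i - ⟪a i, x⟫) ^ 2))
    (x : EuclideanSpace ℝ (Fin J)) :
    ‖AC x - c‖ ^ 2 ≤ ‖x - c‖ ^ 2 ∧
      Prox x ^ 2 ≤ (I : ℝ) * (∑ i, ‖a i‖ ^ 2) * (‖x - c‖ ^ 2 - ‖AC x - c‖ ^ 2) := by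
  have hfold : (fun (z : EuclideanSpace ℝ (Fin J)) (i : Fin I) => U i z)
      = fun z i => z + ((b i - ⟪a i, z⟫) / ‖a i‖ ^ 2) • a i := by
    funext z i; exact hU i z
  obtain ⟨hs1, hs2⟩ := sweep_lemma' c I a b ha hcb x
  set z := Fin.foldl I (fun w i => w + ((b i - ⟪a i, w⟫) / ‖a i‖ ^ 2) • a i) x with hzdef
  have hACx : AC x = Q z := by rw [hAC, hfold]
  clear_value z
  have hqle : ‖AC x - c‖ ≤ ‖z - c‖ := by
    rw [hACx]; exact clip_dist_le' z (Q z) c (fun j => hQ z j) hcbox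
  have hq2 : ‖AC x - c‖ ^ 2 ≤ ‖z - c‖ ^ 2 := pow_le_pow_left₀ (norm_nonneg _) hqle 2
  refine ⟨le_trans hq2 hs1, ?_⟩
  have hD : 0 ≤ ‖x - c‖ ^ 2 - ‖z - c‖ ^ 2 := by linarith
  have hP2 : Prox x ^ 2 = ∑ i, (b i - ⟪a i, x⟫) ^ 2 := by
    rw [hProx, Real.sq_sqrt (Finset.sum_nonneg fun i _ => sq_nonneg _)]
  rw [hP2]
  have hSnn : (0:ℝ) ≤ ∑ i, ‖a i‖ ^ 2 := Finset.sum_nonneg fun i _ => sq_nonneg _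
  have hstep : ∀ i : Fin I, (b i - ⟪a i, x⟫) ^ 2
      ≤ ‖a i‖ ^ 2 * ((I : ℝ) * (‖x - c‖ ^ 2 - ‖z - c‖ ^ 2)) := by
    intro i
    have hi := hs2 i
    have h0 : (b i - ⟪a i, x⟫) ^ 2
        ≤ (‖a i‖ * Real.sqrt ((I : ℝ) * (‖x - c‖ ^ 2 - ‖z - c‖ ^ 2))) ^ 2 := by
      rw [← sq_abs (b i - ⟪a i, x⟫)]
      exact pow_le_pow_left₀ (abs_nonneg _) hi 2
    rwa [mul_pow, Real.sq_sqrt (mul_nonneg (Nat.cast_nonneg I) hD)] at h0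
  calc (∑ i, (b i - ⟪a i, x⟫) ^ 2)
      ≤ ∑ i, ‖a i‖ ^ 2 * ((I : ℝ) * (‖x - c‖ ^ 2 - ‖z - c‖ ^ 2)) :=
        Finset.sum_le_sum fun i _ => hstep i
    _ = (I : ℝ) * (∑ i, ‖a i‖ ^ 2) * (‖x - c‖ ^ 2 - ‖z - c‖ ^ 2) := by
        rw [← Finset.sum_mul]; ring
    _ ≤ (I : ℝ) * (∑ i, ‖a i‖ ^ 2) * (‖x - c‖ ^ 2 - ‖AC x - c‖ ^ 2) := by
        apply mul_le_mul_of_nonneg_left _ (mul_nonneg (Nat.cast_nonneg I) hSnn)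
        linarith

set_option maxHeartbeats 1000000 in
/-- strong perturbation resilience of the ART-based Basic Algorithm. With
`C = {x ∈ [0,1]^J : ⟨aⁱ,x⟩ = b_i for all i}` nonempty, `A_C = Q ∘ U_I ∘ ⋯ ∘ U_1` (Kaczmarz
sweep followed by clipping to `[0,1]`) and `Prox(x) = √(∑_i (b_i − ⟨aⁱ,x⟩)²)`, every
perturbed sequence `y^{k+1} = A_C(y^k + β_k v^k)` with `y⁰ ∈ [0,1]^J`, `{v^k}` bounded,
`β_k ≥ 0` and `∑ β_k < ∞` has, for each `ε > 0`, an iterate with `Prox(y^k) ≤ ε`. -/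
theorem art_strong_perturbation_resilience
    (I J : ℕ)
    (a : Fin I → EuclideanSpace ℝ (Fin J)) (ha : ∀ i, a i ≠ 0)
    (b : Fin I → ℝ)
    (hC : ∃ x : EuclideanSpace ℝ (Fin J),
      (∀ j, 0 ≤ x j ∧ x j ≤ 1) ∧ (∀ i, ⟪a i, x⟫ = b i))
    (U : Fin I → EuclideanSpace ℝ (Fin J) → EuclideanSpace ℝ (Fin J))
    (hU : ∀ i x, U i x = x + ((b i - ⟪a i, x⟫) / ‖a i‖ ^ 2) • a i)
    (Q : EuclideanSpace ℝ (Fin J) → EuclideanSpace ℝ (Fin J))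
    (hQ : ∀ (x : EuclideanSpace ℝ (Fin J)) (j : Fin J), Q x j = min (max (x j) 0) 1)
    (AC : EuclideanSpace ℝ (Fin J) → EuclideanSpace ℝ (Fin J))
    (hAC : ∀ x, AC x = Q (Fin.foldl I (fun z i => U i z) x))
    (Prox : EuclideanSpace ℝ (Fin J) → ℝ)
    (hProx : ∀ x, Prox x = Real.sqrt (∑ i, (b i - ⟪a i, x⟫) ^ 2))
    (ε : ℝ) (hε : 0 < ε)
    (y : ℕ → EuclideanSpace ℝ (Fin J)) (hy0 : ∀ j, 0 ≤ y 0 j ∧ y 0 j ≤ 1)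
    (v : ℕ → EuclideanSpace ℝ (Fin J)) (hv : ∃ M : ℝ, ∀ k, ‖v k‖ ≤ M)
    (β : ℕ → ℝ) (hβ : ∀ k, 0 ≤ β k) (hβsum : Summable β)
    (hrec : ∀ k : ℕ, y (k + 1) = AC (y k + β k • v k)) :
    ∃ k : ℕ, Prox (y k) ≤ ε := by
  obtain ⟨c, hcbox, hcb⟩ := hC
  by_cases hI : I = 0
  · refine ⟨0, ?_⟩
    subst hI
    simp only [hProx, Finset.univ_eq_empty, Finset.sum_empty, Real.sqrt_zero]
    exact hε.le
  have hIpos : 0 < I := Nat.pos_of_ne_zero hI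
  by_contra hcon
  push_neg at hcon
  obtain ⟨M, hvM⟩ := hv
  have hM0 : 0 ≤ M := le_trans (norm_nonneg (v 0)) (hvM 0)
  obtain ⟨S, hSdef⟩ : ∃ t : ℝ, t = ∑ i, ‖a i‖ ^ 2 := ⟨_, rfl⟩
  have hS : 0 < S := by
    rw [hSdef]
    apply Finset.sum_pos
    · intro i _
      exact pow_pos (norm_pos_iff.mpr (ha i)) 2
    · exact ⟨⟨0, hIpos⟩, Finset.mem_univ _⟩
  obtain ⟨L, hLdef⟩ : ∃ t : ℝ, t = Real.sqrt S := ⟨_, rfl⟩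
  have hL : 0 < L := hLdef ▸ Real.sqrt_pos.mpr hS
  obtain ⟨B, hBdef⟩ : ∃ t : ℝ, t = ∑' k, β k := ⟨_, rfl⟩
  have hB0 : 0 ≤ B := hBdef ▸ tsum_nonneg hβ
  have hβB : ∀ k, β k ≤ B := fun k => hBdef ▸ Summable.le_tsum hβsum k (fun j _ => hβ j)
  have hybox : ∀ k, ∀ j, 0 ≤ y k j ∧ y k j ≤ 1 := by
    intro k
    cases k with
    | zero => exact hy0
    | succ m =>
      intro j
      rw [hrec m, hAC, hQ]
      exact ⟨le_min (le_max_right _ _) zero_le_one, min_le_right _ _⟩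
  have key : ∀ x : EuclideanSpace ℝ (Fin J),
      ‖AC x - c‖ ^ 2 ≤ ‖x - c‖ ^ 2 ∧
      Prox x ^ 2 ≤ (I : ℝ) * S * (‖x - c‖ ^ 2 - ‖AC x - c‖ ^ 2) := by
    intro x
    rw [hSdef]
    exact key_ineq a ha b c hcbox hcb U hU Q hQ AC hAC Prox hProx x
  -- eventual smallness of β
  obtain ⟨δ', hδ'def⟩ : ∃ t : ℝ, t = ε / (2 * (L * M + 1)) := ⟨_, rfl⟩
  have hLM : 0 ≤ L * M := mul_nonneg hL.le hM0
  have hδ'pos : 0 < δ' := by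
    rw [hδ'def]
    apply div_pos hε
    linarith
  have hβ0 : Filter.Tendsto β Filter.atTop (nhds 0) := hβsum.tendsto_atTop_zero
  rw [Metric.tendsto_atTop] at hβ0
  obtain ⟨k0, hk0⟩ := hβ0 δ' hδ'pos
  have hβsmall : ∀ k, k0 ≤ k → β k ≤ δ' := by
    intro k hk
    have := hk0 k hk
    rw [Real.dist_eq, sub_zero, abs_of_nonneg (hβ k)] at this
    exact this.le
  have hIS : 0 < (I : ℝ) * S := mul_pos (by exact_mod_cast hIpos) hS
  obtain ⟨δ, hδdef⟩ : ∃ t : ℝ, t = ε ^ 2 / (4 * ((I : ℝ) * S)) := ⟨_, rfl⟩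
  have hδpos : 0 < δ := by rw [hδdef]; positivity
  obtain ⟨C₁, hC₁def⟩ : ∃ t : ℝ, t = 2 * Real.sqrt J * M + B * M ^ 2 := ⟨_, rfl⟩
  have hC₁0 : 0 ≤ C₁ := by rw [hC₁def]; positivity
  -- per-step descent inequality
  have step : ∀ k, k0 ≤ k →
      ‖y (k + 1) - c‖ ^ 2 ≤ ‖y k - c‖ ^ 2 + C₁ * β k - δ := by
    intro k hk
    obtain ⟨x, hxdef⟩ : ∃ t : EuclideanSpace ℝ (Fin J), t = y k + β k • v k := ⟨_, rfl⟩
    have hyx : y (k + 1) = AC x := by rw [hxdef]; exact hrec k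
    have ha1 : ‖x - c‖ ≤ ‖y k - c‖ + β k * M := by
      have h : x - c = (y k - c) + β k • v k := by rw [hxdef]; abel
      rw [h]
      refine le_trans (norm_add_le _ _) ?_
      apply add_le_add_right
      rw [norm_smul, Real.norm_eq_abs, abs_of_nonneg (hβ k)]
      exact mul_le_mul_of_nonneg_left (hvM k) (hβ k)
    have hyc : ‖y k - c‖ ≤ Real.sqrt J := box_norm_le' (y k) c (hybox k) hcbox
    have ha2 : ‖x - c‖ ^ 2 ≤ ‖y k - c‖ ^ 2 + C₁ * β k := by
      have h0 : ‖x - c‖ ^ 2 ≤ (‖y k - c‖ + β k * M) ^ 2 :=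
        pow_le_pow_left₀ (norm_nonneg _) ha1 2
      have hβk := hβ k
      have hβkB := hβB k
      have t1 : ‖y k - c‖ * (β k * M) ≤ Real.sqrt J * (β k * M) :=
        mul_le_mul_of_nonneg_right hyc (mul_nonneg hβk hM0)
      have t2 : β k * β k * M ^ 2 ≤ B * β k * M ^ 2 :=
        mul_le_mul_of_nonneg_right (mul_le_mul_of_nonneg_right hβkB hβk) (sq_nonneg M)
      rw [hC₁def]
      nlinarith [t1, t2]
    have hc1 : ε / 2 ≤ Prox x := by
      have hlip : Prox (y k) ≤ Prox x + L * ‖y k - x‖ := by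
        rw [hProx, hProx, hLdef, hSdef]
        linarith [prox_lip' a b (y k) x]
      have hnyx : ‖y k - x‖ ≤ β k * M := by
        have h : y k - x = -(β k • v k) := by rw [hxdef]; abel
        rw [h, norm_neg, norm_smul, Real.norm_eq_abs, abs_of_nonneg (hβ k)]
        exact mul_le_mul_of_nonneg_left (hvM k) (hβ k)
      have hLb : L * ‖y k - x‖ ≤ ε / 2 := by
        have h1 : L * ‖y k - x‖ ≤ L * (β k * M) :=
          mul_le_mul_of_nonneg_left hnyx hL.le
        have h2 : L * (β k * M) ≤ (L * M) * δ' := by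
          have := hβsmall k hk
          nlinarith [hL.le, hM0, hβ k]
        have h3 : (L * M) * δ' ≤ ε / 2 := by
          rw [hδ'def, ← mul_div_assoc, div_le_div_iff₀ (by linarith) two_pos]
          nlinarith [hLM, hε.le]
        linarith
      have := hcon k
      linarith
    have hc2 : ε ^ 2 / 4 ≤ Prox x ^ 2 := by
      have h0 : (ε / 2) ^ 2 ≤ Prox x ^ 2 :=
        pow_le_pow_left₀ (by positivity) hc1 2
      nlinarith
    obtain ⟨k1, k2⟩ := key x
    have hDfull : δ ≤ ‖x - c‖ ^ 2 - ‖AC x - c‖ ^ 2 := by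
      rw [hδdef, div_le_iff₀ (by positivity)]
      nlinarith
    rw [hyx]
    linarith
  -- telescoping
  have tel : ∀ n : ℕ, ‖y (k0 + n) - c‖ ^ 2 + n * δ
      ≤ ‖y k0 - c‖ ^ 2 + C₁ * ∑ k ∈ Finset.Ico k0 (k0 + n), β k := by
    intro n
    induction n with
    | zero => simp
    | succ m ihm =>
      have hst := step (k0 + m) (Nat.le_add_right _ _)
      have e : k0 + (m + 1) = (k0 + m) + 1 := rfl
      rw [e, Finset.sum_Ico_succ_top (Nat.le_add_right k0 m)]
      push_cast
      have hβk := hβ (k0 + m)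
      linarith
  have hsumB : ∀ n : ℕ, (∑ k ∈ Finset.Ico k0 (k0 + n), β k) ≤ B :=
    fun n => hBdef ▸ Summable.sum_le_tsum _ (fun i _ => hβ i) hβsum
  obtain ⟨n, hn⟩ := exists_nat_gt ((‖y k0 - c‖ ^ 2 + C₁ * B) / δ)
  have h1 := tel n
  have h2 : C₁ * (∑ k ∈ Finset.Ico k0 (k0 + n), β k) ≤ C₁ * B :=
    mul_le_mul_of_nonneg_left (hsumB n) hC₁0
  have h3 : (‖y k0 - c‖ ^ 2 + C₁ * B) < n * δ := by
    rw [div_lt_iff₀ hδpos] at hn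
    linarith
  have h4 : 0 ≤ ‖y (k0 + n) - c‖ ^ 2 := sq_nonneg _
  linarith
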